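/- Let f be a continuous function on ℝ with compact support, and let ψ be a bounded, uniformly continuous, integrable function on ℝ. Then for every ε > 0 there exist finitely many points y_1, …, y_N ∈ ℝ and real coefficients c_1, …, c_N such that sup_{x ∈ ℝ} | (f * ψ)(x) − Σ_{i=1}^N c_i ψ(x − y_i) | < ε; that is, the convolution f * ψ can be uniformly approximated on ℝ by finite linear combinations of translates of ψ. -/

import Mathlib

open MeasureTheory Filter Topology

/-- If `f` is continuous with compact support on `ℝ` and `ψ` is bounded, uniformly
continuous, and integrable on `ℝ`, then the convolution `f * ψ` can be uniformly
approximated on `ℝ` by finite linear combinations of translates of `ψ`. -/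
theorem convolution_approx_by_translates
    (f ψ : ℝ → ℝ) (hfc : Continuous f) (hfs : HasCompactSupport f)
    (hψb : ∃ M : ℝ, ∀ x, |ψ x| ≤ M) (hψu : UniformContinuous ψ)
    (hψi : Integrable ψ) (ε : ℝ) (hε : 0 < ε) :
    ∃ (N : ℕ) (y c : Fin N → ℝ),
      ∀ x : ℝ, |(∫ z, f z * ψ (x - z)) - ∑ i, c i * ψ (x - y i)| < ε := by
  classical
  obtain ⟨M, hM⟩ := hψb
  have hM0 : 0 ≤ M := (abs_nonneg _).trans (hM 0)
  obtain ⟨C, hC⟩ := hfs.exists_bound_of_continuous hfc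
  have hC0 : 0 ≤ C := (norm_nonneg _).trans (hC 0)
  have hfu : UniformContinuous f := hfs.uniformContinuous_of_continuous hfc
  have hψc : Continuous ψ := hψu.continuous
  -- choose R
  obtain ⟨r, hr⟩ := (hfs.isCompact.isBounded).subset_closedBall 0
  set R : ℝ := max r 0 + 1 with hRdef
  have hR0 : 0 < R := by positivity
  have hsupp : tsupport f ⊆ Set.Ioo (-R) R := by
    intro z hz
    have := hr hz
    rw [Metric.mem_closedBall, Real.dist_eq, sub_zero] at this
    have h1 : |z| ≤ max r 0 := this.trans (le_max_left _ _)
    rw [abs_le] at h1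
    constructor <;> [linarith [h1.1]; linarith [h1.2]]
  have hfz : ∀ z, z ∉ Set.Ioc (-R) R → f z = 0 := by
    intro z hz
    by_contra h
    exact hz (Set.Ioo_subset_Ioc_self (hsupp (subset_tsupport f (by simpa using h))))
  -- epsilons and deltas
  set ε1 : ℝ := ε / (8 * R * (M + 1)) with hε1def
  set ε2 : ℝ := ε / (8 * R * (C + 1)) with hε2def
  have hε1 : 0 < ε1 := by positivity
  have hε2 : 0 < ε2 := by positivity
  obtain ⟨δ1, hδ1, hδ1'⟩ := Metric.uniformContinuous_iff.mp hfu ε1 hε1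
  obtain ⟨δ2, hδ2, hδ2'⟩ := Metric.uniformContinuous_iff.mp hψu ε2 hε2
  set δ : ℝ := min δ1 δ2 with hδdef
  have hδ0 : 0 < δ := lt_min hδ1 hδ2
  have hδle1 : δ ≤ δ1 := min_le_left _ _
  have hδle2 : δ ≤ δ2 := min_le_right _ _
  obtain ⟨n, hn⟩ := exists_nat_gt (2 * R / δ)
  have hn0 : 0 < (n : ℝ) := lt_trans (by positivity) hn
  have hnn : 0 < n := by exact_mod_cast hn0
  set h : ℝ := 2 * R / n with hhdef
  have hh0 : 0 < h := by positivity
  have hhδ : h < δ := by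
    rw [hhdef, div_lt_iff₀ hn0]
    calc 2 * R = (2 * R / δ) * δ := by field_simp
    _ < n * δ := by exact mul_lt_mul_of_pos_right hn hδ0
    _ = δ * n := mul_comm _ _
  set a : ℕ → ℝ := fun k => -R + k * h with hadef
  clear_value R ε1 ε2 δ h a
  refine ⟨n, fun i => a i, fun i => f (a i) * h, fun x => ?_⟩
  -- integrability
  have hcont : Continuous fun z => f z * ψ (x - z) :=
    hfc.mul (hψc.comp (continuous_const.sub continuous_id))
  have hint : ∀ (u v : ℝ), IntervalIntegrable (fun z => f z * ψ (x - z)) volume u v :=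
    fun u v => hcont.intervalIntegrable u v
  -- rewrite whole integral as interval integral
  have hwhole : (∫ z, f z * ψ (x - z)) = ∫ z in (-R)..R, f z * ψ (x - z) := by
    rw [intervalIntegral.integral_of_le (by linarith)]
    symm
    apply setIntegral_eq_integral_of_forall_compl_eq_zero
    intro z hz
    rw [hfz z hz, zero_mul]
  have haR : a n = R := by
    rw [hadef]
    simp only []
    have : (n:ℝ) * h = 2 * R := by
      rw [hhdef, mul_div_assoc', mul_div_cancel_left₀ _ hn0.ne']
    linarith
  have ha0 : a 0 = -R := by simp [hadef]
  -- sum of adjacent integrals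
  have hsum : ∑ k ∈ Finset.range n, ∫ z in (a k)..(a (k+1)), f z * ψ (x - z) =
      ∫ z in (-R)..R, f z * ψ (x - z) := by
    rw [← ha0, ← haR]
    exact intervalIntegral.sum_integral_adjacent_intervals (fun k _ => hint _ _)
  have hstep : ∀ k : ℕ, a (k+1) = a k + h := by
    intro k; simp [hadef]; push_cast; ring
  -- express c i * ψ (x - y i) as interval integral of a constant
  have hconst : ∀ k : ℕ, f (a k) * h * ψ (x - a k) =
      ∫ _ in (a k)..(a (k+1)), f (a k) * ψ (x - a k) := by
    intro k
    rw [intervalIntegral.integral_const, hstep k, smul_eq_mul]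
    ring
  have hsum2 : (∑ i : Fin n, (fun i : Fin n => f (a i) * h) i * ψ (x - a i)) =
      ∑ k ∈ Finset.range n, ∫ _ in (a k)..(a (k+1)), f (a k) * ψ (x - a k) := by
    rw [Fin.sum_univ_eq_sum_range (fun k => f (a k) * h * ψ (x - a k))]
    exact Finset.sum_congr rfl fun k _ => hconst k
  rw [hwhole, ← hsum, hsum2, ← Finset.sum_sub_distrib]
  -- per-interval bound
  have key : ∀ k ∈ Finset.range n,
      |(∫ z in (a k)..(a (k+1)), f z * ψ (x - z)) -
        ∫ _ in (a k)..(a (k+1)), f (a k) * ψ (x - a k)| ≤ (ε / (4 * R)) * h := by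
    intro k _
    rw [← intervalIntegral.integral_sub (hint _ _) (intervalIntegrable_const)]
    have hb : ∀ z ∈ Set.uIoc (a k) (a (k+1)),
        ‖f z * ψ (x - z) - f (a k) * ψ (x - a k)‖ ≤ ε / (4 * R) := by
      intro z hz
      rw [Set.uIoc_of_le (by rw [hstep]; linarith)] at hz
      have hz1 : a k < z := hz.1
      have hz2 : z ≤ a k + h := by rw [← hstep]; exact hz.2
      have hdz : dist z (a k) < δ := by
        rw [Real.dist_eq, abs_of_pos (by linarith)]
        linarith
      have hd1 : |f z - f (a k)| < ε1 := hδ1' (hdz.trans_le hδle1)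
      have hd2 : |ψ (x - z) - ψ (x - a k)| < ε2 := by
        apply hδ2'
        rw [Real.dist_eq]
        rw [Real.dist_eq] at hdz
        have : x - z - (x - a k) = -(z - a k) := by ring
        rw [this, abs_neg]
        exact hdz.trans_le hδle2
      have expand : f z * ψ (x - z) - f (a k) * ψ (x - a k) =
          (f z - f (a k)) * ψ (x - z) + f (a k) * (ψ (x - z) - ψ (x - a k)) := by ring
      rw [Real.norm_eq_abs, expand]
      calc |(f z - f (a k)) * ψ (x - z) + f (a k) * (ψ (x - z) - ψ (x - a k))|
          ≤ |(f z - f (a k)) * ψ (x - z)| + |f (a k) * (ψ (x - z) - ψ (x - a k))| :=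
            abs_add_le _ _
        _ = |f z - f (a k)| * |ψ (x - z)| + |f (a k)| * |ψ (x - z) - ψ (x - a k)| := by
            rw [abs_mul, abs_mul]
        _ ≤ ε1 * M + C * ε2 := by
            have h1 : |f z - f (a k)| * |ψ (x - z)| ≤ ε1 * M :=
              mul_le_mul hd1.le (hM _) (abs_nonneg _) hε1.le
            have h2 : |f (a k)| * |ψ (x - z) - ψ (x - a k)| ≤ C * ε2 := by
              have := hC (a k)
              rw [Real.norm_eq_abs] at this
              exact mul_le_mul this hd2.le (abs_nonneg _) hC0
            linarith
        _ ≤ ε / (4 * R) := by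
            have e1 : ε1 * M ≤ ε / (8 * R) := by
              rw [hε1def]
              rw [div_mul_eq_mul_div, div_le_div_iff₀ (by positivity) (by positivity)]
              nlinarith
            have e2 : C * ε2 ≤ ε / (8 * R) := by
              rw [hε2def]
              rw [mul_comm, div_mul_eq_mul_div, div_le_div_iff₀ (by positivity) (by positivity)]
              nlinarith
            have : ε / (8 * R) + ε / (8 * R) = ε / (4 * R) := by
              field_simp [hR0.ne']
              ring
            linarith
    have := intervalIntegral.norm_integral_le_of_norm_le_const hb
    rw [Real.norm_eq_abs] at this
    refine this.trans ?_
    rw [hstep k]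
    rw [show a k + h - a k = h by ring, abs_of_pos hh0, mul_comm]
  calc |∑ k ∈ Finset.range n, ((∫ z in (a k)..(a (k+1)), f z * ψ (x - z)) -
          ∫ _ in (a k)..(a (k+1)), f (a k) * ψ (x - a k))|
      ≤ ∑ k ∈ Finset.range n, |(∫ z in (a k)..(a (k+1)), f z * ψ (x - z)) -
          ∫ _ in (a k)..(a (k+1)), f (a k) * ψ (x - a k)| := Finset.abs_sum_le_sum_abs _ _
    _ ≤ ∑ _k ∈ Finset.range n, (ε / (4 * R)) * h := Finset.sum_le_sum key
    _ = n * ((ε / (4 * R)) * h) := by rw [Finset.sum_const, Finset.card_range, nsmul_eq_mul]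
    _ = ε / 2 := by rw [hhdef]; field_simp [hR0.ne', hn0.ne']; ring
    _ < ε := by linarith
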